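/- Existence and uniqueness of least common multiples: for all u, v ∈ S there exists a unique w ∈ S such that u·S ∩ v·S = w·S (where x·S = {x * s : s ∈ S}). -/
import Mathlib


open scoped BigOperators

/-- `u` divides `w` in `S`: `w ∈ u·S`. -/
def SDvd {G : Type*} [Group G] (S : Submonoid G) (u w : G) : Prop := ∃ s ∈ S, w = u * s

/-- The left set `u·S = {u * s : s ∈ S}`. -/
def leftSet {G : Type*} [Group G] (S : Submonoid G) (u : G) : Set G := {w | ∃ s ∈ S, w = u * s}

/-- `τ(u)`: the number of ordered factorizations `u = v * w` with `v, w ∈ S`. -/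
noncomputable def tau {G : Type*} [Group G] (S : Submonoid G) (u : G) : ℕ :=
  Set.ncard {p : G × G | p.1 ∈ S ∧ p.2 ∈ S ∧ p.1 * p.2 = u}

/-- An integral monoid: a submonoid of a group satisfying Axioms I, II, III. -/
structure IntegralMonoid {G : Type*} [Group G] (S : Submonoid G) : Prop where
  ax1 : ∀ u ∈ S, u⁻¹ ∈ S → u = 1
  ax2 : ∀ u : G, ∃ x ∈ S, ∃ y ∈ S, u = x * y⁻¹ ∧
        ∀ z ∈ S, ∀ w ∈ S, u = z * w⁻¹ → ∃ c ∈ S, z = x * c ∧ w = y * c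
  ax3 : ∀ u ∈ S, {p : G × G | p.1 ∈ S ∧ p.2 ∈ S ∧ p.1 * p.2 = u}.Finite

theorem lcm_exists_unique {G : Type*} [Group G] (S : Submonoid G)
    (hS : IntegralMonoid S) (u : G) (hu : u ∈ S) (v : G) (hv : v ∈ S) :
    ∃! w : G, w ∈ S ∧ leftSet S u ∩ leftSet S v = leftSet S w := by
  obtain ⟨x, hx, y, hy, hxy, hmax⟩ := hS.ax2 (u⁻¹ * v)
  have key : u * x = v * y := by
    have : u⁻¹ * v * y = x := by rw [hxy]; group
    calc u * x = u * (u⁻¹ * v * y) := by rw [this]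
    _ = v * y := by group
  have heq : leftSet S u ∩ leftSet S v = leftSet S (u * x) := by
    ext t
    constructor
    · rintro ⟨⟨z, hz, rfl⟩, ⟨w, hw, hvw⟩⟩
      have huv : u⁻¹ * v = z * w⁻¹ := by
        have h : u * z = v * w := hvw
        have : v = u * z * w⁻¹ := by rw [h]; group
        rw [this]; group
      obtain ⟨c, hc, hzc, hwc⟩ := hmax z hz w hw huv
      exact ⟨c, hc, by rw [hzc, mul_assoc]⟩
    · rintro ⟨s, hs, rfl⟩
      exact ⟨⟨x * s, S.mul_mem hx hs, by group⟩,
        ⟨y * s, S.mul_mem hy hs, by rw [← mul_assoc, key]⟩⟩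
  refine ⟨u * x, ⟨S.mul_mem hu hx, heq⟩, ?_⟩
  rintro w ⟨hwS, hweq⟩
  have h1 : w ∈ leftSet S (u * x) := by
    rw [← heq, hweq]; exact ⟨1, S.one_mem, by simp⟩
  have h2 : u * x ∈ leftSet S w := by
    rw [← hweq, heq]; exact ⟨1, S.one_mem, by simp⟩
  obtain ⟨c, hc, hc1⟩ := h1
  obtain ⟨d, hd, hd1⟩ := h2
  have : u * x = u * x * (c * d) := by rw [← mul_assoc, ← hc1, ← hd1]
  have hcd : c * d = 1 :=
    (mul_left_cancel (a := u * x) (by rw [← this, mul_one])).symm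
  have hcinv : c⁻¹ ∈ S := (inv_eq_of_mul_eq_one_right hcd) ▸ hd
  have : c = 1 := hS.ax1 c hc hcinv
  rw [hc1, this, mul_one]
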